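/- For quaternions q and p, p belongs to the set [q] = {Re q + i·|Im q| : i ∈ 𝕊} if and only if there exists a nonzero quaternion r such that p = r⁻¹ q r. -/

import Mathlib

open scoped Quaternion
open Quaternion

namespace MySphereConj

lemma smul_eq_coe_mul (r : ℝ) (a : ℍ[ℝ]) : r • a = ((r : ℝ) : ℍ[ℝ]) * a := by
  ext <;> simp [Quaternion.re_mul, Quaternion.imI_mul, Quaternion.imJ_mul, Quaternion.imK_mul,
    Quaternion.re_coe, Quaternion.imI_coe, Quaternion.imJ_coe, Quaternion.imK_coe]

lemma mul_coe_eq_smul (r : ℝ) (a : ℍ[ℝ]) : a * ((r : ℝ) : ℍ[ℝ]) = r • a := by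
  rw [← Quaternion.coe_commutes, ← smul_eq_coe_mul]

lemma re_mul_comm (a b : ℍ[ℝ]) : (a * b).re = (b * a).re := by
  simp only [Quaternion.re_mul]; ring

lemma anticomm_of_orthogonal (x y : ℍ[ℝ]) (hx : x.re = 0) (hy : y.re = 0)
    (h : x.imI * y.imI + x.imJ * y.imJ + x.imK * y.imK = 0) :
    x * y = -(y * x) := by
  ext <;>
    simp only [Quaternion.re_mul, Quaternion.imI_mul, Quaternion.imJ_mul, Quaternion.imK_mul,
      Quaternion.re_neg, Quaternion.imI_neg, Quaternion.imJ_neg, Quaternion.imK_neg, hx, hy] <;>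
    ring_nf <;> linarith

lemma normSq_im (a : ℍ[ℝ]) : normSq a.im = normSq a - a.re ^ 2 := by
  simp [Quaternion.normSq_def']; ring

lemma im_mul_self (a : ℍ[ℝ]) : a.im * a.im = ((-(‖a.im‖ * ‖a.im‖) : ℝ) : ℍ[ℝ]) := by
  have h := Quaternion.sq_eq_neg_normSq.mpr a.re_im
  rw [sq] at h
  rw [h, Quaternion.normSq_eq_norm_mul_self]
  push_cast
  ring

end MySphereConj

open MySphereConj

theorem mem_sphere_iff_conjugate (q p : ℍ[ℝ]) :
    (∃ i : ℍ[ℝ], i.re = 0 ∧ i ^ 2 = -1 ∧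
        p = ((q.re : ℝ) : ℍ[ℝ]) + i * ((‖q.im‖ : ℝ) : ℍ[ℝ]))
      ↔ ∃ r : ℍ[ℝ], r ≠ 0 ∧ p = r⁻¹ * q * r := by
  constructor
  · rintro ⟨i, hi0, hi2, hp⟩
    have hii : i * i = -1 := by rw [← sq, hi2]
    by_cases him : q.im = 0
    · refine ⟨1, one_ne_zero, ?_⟩
      rw [hp, him]
      simp only [norm_zero, Quaternion.coe_zero, mul_zero, add_zero, inv_one, one_mul, mul_one]
      conv_rhs => rw [← q.re_add_im, him, add_zero]
    · set n : ℝ := ‖q.im‖ with hn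
      have hn0 : n ≠ 0 := norm_ne_zero_iff.mpr him
      have hp' : p = ((q.re : ℝ) : ℍ[ℝ]) + n • i := by
        rw [hp, smul_eq_coe_mul, Quaternion.coe_commutes]
      -- it suffices to find r ≠ 0 with q * r = r * p
      suffices h : ∃ r : ℍ[ℝ], r ≠ 0 ∧ q * r = r * p by
        obtain ⟨r, hr, hqr⟩ := h
        exact ⟨r, hr, by rw [mul_assoc, hqr, ← mul_assoc, inv_mul_cancel₀ hr, one_mul]⟩
      by_cases hij : n • i = -q.im
      · -- p = re q - q.im; take r a nonzero pure quaternion orthogonal to q.im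
        have hp2 : p = ((q.re : ℝ) : ℍ[ℝ]) - q.im := by
          rw [hp', hij]; exact (sub_eq_add_neg _ _).symm
        obtain ⟨r, hr, hr0, hdot⟩ :
            ∃ r : ℍ[ℝ], r ≠ 0 ∧ r.re = 0 ∧
              q.im.imI * r.imI + q.im.imJ * r.imJ + q.im.imK * r.imK = 0 := by
          by_cases hI : q.imI = 0
          · refine ⟨⟨0, 1, 0, 0⟩, ?_, rfl, by simp [hI]⟩
            intro h; simpa using congrArg QuaternionAlgebra.imI h
          · refine ⟨⟨0, q.imJ, -q.imI, 0⟩, ?_, rfl, by simp; ring⟩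
            intro h
            have := congrArg QuaternionAlgebra.imJ h
            simp at this
            exact hI this
        have hanti := anticomm_of_orthogonal q.im r q.re_im hr0 hdot
        refine ⟨r, hr, ?_⟩
        calc q * r = (((q.re : ℝ) : ℍ[ℝ]) + q.im) * r := by rw [q.re_add_im]
          _ = ((q.re : ℝ) : ℍ[ℝ]) * r + q.im * r := by rw [add_mul]
          _ = r * ((q.re : ℝ) : ℍ[ℝ]) - r * q.im := by
              rw [hanti, Quaternion.coe_commutes]; abel
          _ = r * p := by rw [hp2, mul_sub]
      · -- take r = n • i + q.im
        refine ⟨n • i + q.im, ?_, ?_⟩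
        · intro h
          exact hij (by linear_combination (norm := module) h)
        · have hvv : q.im * q.im = ((-(n * n) : ℝ) : ℍ[ℝ]) := im_mul_self q
          have hvv2 : q.im * q.im = (n * n) • (i * i) := by
            rw [hvv, hii, smul_neg, smul_eq_coe_mul, mul_one]
            push_cast
            ring
          calc q * (n • i + q.im)
              = (((q.re : ℝ) : ℍ[ℝ]) + q.im) * (n • i + q.im) := by rw [q.re_add_im]
            _ = n • (((q.re : ℝ) : ℍ[ℝ]) * i) + ((q.re : ℝ) : ℍ[ℝ]) * q.im
                + n • (q.im * i) + q.im * q.im := by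
                simp only [add_mul, mul_add, mul_smul_comm, smul_add]; abel
            _ = n • (i * ((q.re : ℝ) : ℍ[ℝ])) + q.im * ((q.re : ℝ) : ℍ[ℝ])
                + n • (q.im * i) + (n * n) • (i * i) := by
                rw [Quaternion.coe_commutes, Quaternion.coe_commutes, hvv2]
            _ = (n • i + q.im) * (((q.re : ℝ) : ℍ[ℝ]) + n • i) := by
                simp only [add_mul, mul_add, smul_mul_assoc, mul_smul_comm, smul_add, smul_smul]
                abel
            _ = (n • i + q.im) * p := by rw [← hp']
  · rintro ⟨r, hr, hp⟩
    have hre : p.re = q.re := by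
      rw [hp, mul_assoc, re_mul_comm, mul_assoc, mul_inv_cancel₀ hr, mul_one]
    have hnorm : ‖p‖ = ‖q‖ := by
      rw [hp, norm_mul, norm_mul, norm_inv]
      have hrn : ‖r‖ ≠ 0 := norm_ne_zero_iff.mpr hr
      field_simp
    have hns : normSq p = normSq q := by
      rw [Quaternion.normSq_eq_norm_mul_self, Quaternion.normSq_eq_norm_mul_self, hnorm]
    have hnsim : normSq p.im = normSq q.im := by
      rw [normSq_im, normSq_im, hns, hre]
    have himnorm : ‖p.im‖ = ‖q.im‖ := by
      have h1 : ‖p.im‖ * ‖p.im‖ = ‖q.im‖ * ‖q.im‖ := by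
        rw [← Quaternion.normSq_eq_norm_mul_self, ← Quaternion.normSq_eq_norm_mul_self, hnsim]
      nlinarith [norm_nonneg p.im, norm_nonneg q.im]
    by_cases him : q.im = 0
    · have hpim : p.im = 0 := by
        rw [← norm_eq_zero, himnorm, him, norm_zero]
      obtain ⟨i, hi⟩ : ∃ i : ℍ[ℝ], i.re = 0 ∧ i.imI = 1 ∧ i.imJ = 0 ∧ i.imK = 0 :=
        ⟨⟨0, 1, 0, 0⟩, rfl, rfl, rfl, rfl⟩
      refine ⟨i, hi.1, ?_, ?_⟩
      · ext <;>
          simp [sq, Quaternion.re_mul, Quaternion.imI_mul, Quaternion.imJ_mul,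
            Quaternion.imK_mul, hi]
      · rw [him, norm_zero, Quaternion.coe_zero, mul_zero, add_zero, ← hre]
        conv_lhs => rw [← p.re_add_im, hpim, add_zero]
    · set n : ℝ := ‖q.im‖ with hn
      have hn0 : n ≠ 0 := norm_ne_zero_iff.mpr him
      refine ⟨n⁻¹ • p.im, by simp, ?_, ?_⟩
      · have hre0 : (n⁻¹ • p.im).re = 0 := by simp
        have h := Quaternion.sq_eq_neg_normSq.mpr hre0
        rw [h, Quaternion.normSq_smul, hnsim, Quaternion.normSq_eq_norm_mul_self, ← hn]
        have : (n⁻¹) ^ 2 * (n * n) = 1 := by field_simp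
        rw [this]
        push_cast
        ring
      · rw [MySphereConj.mul_coe_eq_smul, smul_smul, mul_inv_cancel₀ hn0, one_smul, ← hre, p.re_add_im]
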